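/- arXiv:1008.0286 — 8 statements merged into one kernel-verified Lean document; each statement's English description precedes it below -/
import Mathlib

section
/- For every set S, the topological space TO(S) of all total orderings on S, equipped with the topology 𝒰(S), is compact. -/
/-- A binary relation is a total ordering: antisymmetric, transitive, and total. -/
def IsTotalOrdering {S : Type*} (r : S → S → Prop) : Prop :=
  (∀ a b, r a b → r b a → a = b) ∧ (∀ a b c, r a b → r b c → r a c) ∧ (∀ a b, r a b ∨ r b a)

/-- The set `TO(S)` of all total orderings on `S`. -/
def TO (S : Type*) : Type _ := {r : S → S → Prop // IsTotalOrdering r}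

/-- The topology `𝒰(S)` on `TO(S)`, generated by the subbasis of all sets
`U_{(a,b)} = {≤ ∈ TO(S) : a ≤ b}`. -/
instance TOTopology (S : Type*) : TopologicalSpace (TO S) :=
  TopologicalSpace.generateFrom {U | ∃ a b : S, U = {r : TO S | r.1 a b}}

lemma TO_clopen_aux {S : Type*} (a b : S) :
    IsClopen {f : S → S → Bool | f a b = true} := by
  have hc : Continuous (fun f : S → S → Bool => f a b) :=
    (continuous_apply b).comp (continuous_apply a)
  have : {f : S → S → Bool | f a b = true} = (fun f : S → S → Bool => f a b) ⁻¹' {true} := rfl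
  rw [this]
  exact (isClopen_discrete _).preimage hc

/-- For every set `S`, the space `TO(S)` of total orderings on `S`, with the topology `𝒰(S)`,
is compact. -/
theorem TO_compactSpace (S : Type*) : CompactSpace (TO S) := by
  classical
  set X : Set (S → S → Bool) := {f | IsTotalOrdering (fun a b => f a b = true)} with hXdef
  have hX : IsClosed X := by
    have hXeq : X =
        (⋂ (a : S) (b : S), {f : S → S → Bool | f a b = true ∧ f b a = true → a = b}) ∩
        ((⋂ (a : S) (b : S) (c : S),
            {f : S → S → Bool | f a b = true ∧ f b c = true → f a c = true}) ∩
         (⋂ (a : S) (b : S), {f : S → S → Bool | f a b = true ∨ f b a = true})) := by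
      ext f
      simp only [hXdef, Set.mem_setOf_eq, IsTotalOrdering, Set.mem_inter_iff, Set.mem_iInter]
      constructor
      · rintro ⟨h1, h2, h3⟩
        exact ⟨fun a b h => h1 a b h.1 h.2, fun a b c h => h2 a b c h.1 h.2, h3⟩
      · rintro ⟨h1, h2, h3⟩
        exact ⟨fun a b ha hb => h1 a b ⟨ha, hb⟩, fun a b c ha hb => h2 a b c ⟨ha, hb⟩, h3⟩
    rw [hXeq]
    refine IsClosed.inter ?_ (IsClosed.inter ?_ ?_)
    · refine isClosed_iInter fun a => isClosed_iInter fun b => ?_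
      by_cases hab : a = b
      · have : {f : S → S → Bool | f a b = true ∧ f b a = true → a = b} = Set.univ := by
          ext f; simp [hab]
        rw [this]; exact isClosed_univ
      · have : {f : S → S → Bool | f a b = true ∧ f b a = true → a = b} =
            ({f : S → S → Bool | f a b = true} ∩ {f : S → S → Bool | f b a = true})ᶜ := by
          ext f; simp [hab]
        rw [this]
        exact (((TO_clopen_aux a b).isOpen.inter (TO_clopen_aux b a).isOpen)).isClosed_compl
    · refine isClosed_iInter fun a => isClosed_iInter fun b => isClosed_iInter fun c => ?_
      have : {f : S → S → Bool | f a b = true ∧ f b c = true → f a c = true} =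
          ({f : S → S → Bool | f a b = true} ∩ {f : S → S → Bool | f b c = true})ᶜ ∪
          {f : S → S → Bool | f a c = true} := by
        ext f; simp only [Set.mem_union, Set.mem_compl_iff, Set.mem_inter_iff, Set.mem_setOf_eq]; tauto
      rw [this]
      exact (((TO_clopen_aux a b).isOpen.inter (TO_clopen_aux b c).isOpen)).isClosed_compl.union
        (TO_clopen_aux a c).isClosed
    · refine isClosed_iInter fun a => isClosed_iInter fun b => ?_
      have : {f : S → S → Bool | f a b = true ∨ f b a = true} =
          {f : S → S → Bool | f a b = true} ∪ {f : S → S → Bool | f b a = true} := rfl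
      rw [this]
      exact (TO_clopen_aux a b).isClosed.union (TO_clopen_aux b a).isClosed
  have hXc : IsCompact X := hX.isCompact
  -- the map from X to TO S
  let e : X → TO S := fun f => ⟨fun a b => f.1 a b = true, f.2⟩
  have he_cont : Continuous e := by
    apply continuous_generateFrom_iff.mpr
    rintro U ⟨a, b, rfl⟩
    have : e ⁻¹' {r : TO S | r.1 a b} =
        Subtype.val ⁻¹' {f : S → S → Bool | f a b = true} := rfl
    rw [this]
    exact (TO_clopen_aux a b).isOpen.preimage continuous_subtype_val
  have he_surj : Function.Surjective e := by
    intro r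
    have hmem : (fun a b => decide (r.1 a b)) ∈ X := by
      simp only [hXdef, Set.mem_setOf_eq, decide_eq_true_eq]
      exact r.2
    refine ⟨⟨fun a b => decide (r.1 a b), hmem⟩, ?_⟩
    apply Subtype.ext
    funext a b
    exact propext (by simp [e])
  have : CompactSpace X := isCompact_iff_compactSpace.mp hXc
  constructor
  rw [← Set.range_eq_univ.mpr he_surj]
  exact isCompact_range he_cont
end

section
/- If a set S admits a filtration 𝐒 = (S_i)_{i∈ℕ} in which every S_i is finite, then d_𝐒 is a metric on TO(S), the topology induced on TO(S) by the metric d_𝐒 coincides with the topology 𝒰(S) (in particular this metric topology is independent of the choice of such a filtration), and 𝒰(S) is Hausdorff. -/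
/-- The function `d_𝐒` associated to a filtration `𝐒 = (F i)` of `S`:
`d_𝐒(≤,≤') = 2^{-r}` where `r = sup{ i : ≤ and ≤' agree on F i }`, and `d_𝐒(≤,≤') = 0`
when the supremum is infinite (i.e. when `≤ = ≤'`). -/
noncomputable def dS {S : Type*} (F : ℕ → Set S) (r r' : TO S) : ℝ :=
  letI := Classical.dec (r = r')
  if r = r' then 0
  else (2 : ℝ) ^
    (-((sSup {i : ℕ | ∀ a ∈ F i, ∀ b ∈ F i, (r.1 a b ↔ r'.1 a b)} : ℕ) : ℤ))

namespace DSAux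

variable {S : Type*} (F : ℕ → Set S)

/-- The set of levels on which two total orders agree. -/
def agA (r r' : TO S) : Set ℕ := {i | ∀ a ∈ F i, ∀ b ∈ F i, (r.1 a b ↔ r'.1 a b)}

variable {F}

lemma dS_self (r : TO S) : dS F r r = 0 := by simp [dS]

lemma dS_of_ne {r r' : TO S} (h : r ≠ r') :
    dS F r r' = (2 : ℝ) ^ (-((sSup (agA F r r') : ℕ) : ℤ)) := by
  simp [dS, agA, h]

lemma subbasic_open (a b : S) : IsOpen {r : TO S | r.1 a b} :=
  TopologicalSpace.isOpen_generateFrom_of_mem ⟨a, b, rfl⟩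

variable (h0 : F 0 = ∅) (hmono : ∀ i, F i ⊆ F (i + 1)) (hunion : (⋃ i, F i) = Set.univ)

lemma Fmono (hmono : ∀ i, F i ⊆ F (i + 1)) : Monotone F :=
  monotone_nat_of_le_succ hmono

lemma zero_mem_agA (h0 : F 0 = ∅) (r r' : TO S) : 0 ∈ agA F r r' := by
  intro a ha; rw [h0] at ha; exact absurd ha (Set.notMem_empty a)

lemma agA_down (hmono : ∀ i, F i ⊆ F (i + 1)) {r r' : TO S} {i j : ℕ}
    (hj : j ≤ i) (hi : i ∈ agA F r r') : j ∈ agA F r r' :=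
  fun a ha b hb => hi a (Fmono hmono hj ha) b (Fmono hmono hj hb)

lemma agA_symm (r r' : TO S) : agA F r r' = agA F r' r := by
  ext i
  constructor <;> intro h a ha b hb <;> exact (h a ha b hb).symm

lemma exists_level (hunion : (⋃ i, F i) = Set.univ) (hmono : ∀ i, F i ⊆ F (i + 1))
    (a b : S) : ∃ N, a ∈ F N ∧ b ∈ F N := by
  have ha : a ∈ ⋃ i, F i := hunion ▸ Set.mem_univ a
  have hb : b ∈ ⋃ i, F i := hunion ▸ Set.mem_univ b
  obtain ⟨i, hi⟩ := Set.mem_iUnion.mp ha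
  obtain ⟨j, hj⟩ := Set.mem_iUnion.mp hb
  exact ⟨max i j, Fmono hmono (le_max_left i j) hi, Fmono hmono (le_max_right i j) hj⟩

lemma exists_witness {r r' : TO S} (h : r ≠ r') :
    ∃ a b, ¬(r.1 a b ↔ r'.1 a b) := by
  have h1 : r.1 ≠ r'.1 := fun h' => h (Subtype.ext h')
  rw [Function.ne_iff] at h1
  obtain ⟨a, ha⟩ := h1
  rw [Function.ne_iff] at ha
  obtain ⟨b, hb⟩ := ha
  exact ⟨a, b, fun h' => hb (propext h')⟩

lemma bddAbove_agA (hunion : (⋃ i, F i) = Set.univ) (hmono : ∀ i, F i ⊆ F (i + 1))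
    {r r' : TO S} (h : r ≠ r') : BddAbove (agA F r r') := by
  obtain ⟨a, b, hab⟩ := exists_witness h
  obtain ⟨N, haN, hbN⟩ := exists_level hunion hmono a b
  refine ⟨N, fun i hi => ?_⟩
  by_contra hlt
  push_neg at hlt
  exact hab (hi a (Fmono hmono hlt.le haN) b (Fmono hmono hlt.le hbN))

lemma sSup_mem_agA (h0 : F 0 = ∅) (hunion : (⋃ i, F i) = Set.univ)
    (hmono : ∀ i, F i ⊆ F (i + 1)) {r r' : TO S} (h : r ≠ r') :
    sSup (agA F r r') ∈ agA F r r' :=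
  Nat.sSup_mem ⟨0, zero_mem_agA h0 r r'⟩ (bddAbove_agA hunion hmono h)

lemma dS_nonneg (r r' : TO S) : 0 ≤ dS F r r' := by
  by_cases h : r = r'
  · simp [h, dS_self]
  · rw [dS_of_ne h]; positivity

lemma mem_agA_of_dS_lt (h0 : F 0 = ∅) (hunion : (⋃ i, F i) = Set.univ)
    (hmono : ∀ i, F i ⊆ F (i + 1)) {r r' : TO S} {N : ℕ}
    (h : dS F r r' < (2 : ℝ) ^ (-(N : ℤ))) (hne : r ≠ r') : N ∈ agA F r r' := by
  rw [dS_of_ne hne] at h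
  have := (zpow_lt_zpow_iff_right₀ (one_lt_two (α := ℝ))).mp h
  have hN' : (N : ℤ) < sSup (agA F r r') := by linarith
  have hN : N ≤ sSup (agA F r r') := by exact_mod_cast hN'.le
  exact agA_down hmono hN (sSup_mem_agA h0 hunion hmono hne)

lemma dS_le_of_mem (hunion : (⋃ i, F i) = Set.univ) (hmono : ∀ i, F i ⊆ F (i + 1))
    {r r' : TO S} {N : ℕ} (h : N ∈ agA F r r') :
    dS F r r' ≤ (2 : ℝ) ^ (-(N : ℤ)) := by
  by_cases hne : r = r'
  · rw [hne, dS_self]; positivity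
  · rw [dS_of_ne hne]
    have : N ≤ sSup (agA F r r') := le_csSup (bddAbove_agA hunion hmono hne) h
    exact zpow_le_zpow_right₀ one_le_two (by exact_mod_cast neg_le_neg (by exact_mod_cast this))

lemma dS_ultra (h0 : F 0 = ∅) (hunion : (⋃ i, F i) = Set.univ)
    (hmono : ∀ i, F i ⊆ F (i + 1)) (r r' r'' : TO S) :
    dS F r r'' ≤ max (dS F r r') (dS F r' r'') := by
  by_cases h1 : r = r'
  · subst h1; exact le_max_right _ _
  by_cases h2 : r' = r''
  · subst h2; exact le_max_left _ _
  by_cases h3 : r = r''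
  · subst h3
    exact le_trans (by rw [dS_self]; exact dS_nonneg r r') (le_max_left _ _)
  set s1 := sSup (agA F r r') with hs1
  set s2 := sSup (agA F r' r'') with hs2
  have hm1 : min s1 s2 ∈ agA F r r' :=
    agA_down hmono (min_le_left _ _) (sSup_mem_agA h0 hunion hmono h1)
  have hm2 : min s1 s2 ∈ agA F r' r'' :=
    agA_down hmono (min_le_right _ _) (sSup_mem_agA h0 hunion hmono h2)
  have hm : min s1 s2 ∈ agA F r r'' :=
    fun a ha b hb => (hm1 a ha b hb).trans (hm2 a ha b hb)
  have hle : dS F r r'' ≤ (2 : ℝ) ^ (-((min s1 s2 : ℕ) : ℤ)) :=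
    dS_le_of_mem hunion hmono hm
  rcases min_cases s1 s2 with ⟨hmin, _⟩ | ⟨hmin, _⟩
  · rw [hmin] at hle
    exact le_trans hle (le_trans (le_of_eq (dS_of_ne h1).symm) (le_max_left _ _))
  · rw [hmin] at hle
    exact le_trans hle (le_trans (le_of_eq (dS_of_ne h2).symm) (le_max_right _ _))

end DSAux

open DSAux in
/-- If `S` admits a filtration `𝐒 = (F i)` by finite sets, then `d_𝐒` is a metric on `TO(S)`,
the topology it induces coincides with `𝒰(S)` (so in particular the metric topology does not
depend on the choice of such a filtration), and `𝒰(S)` is Hausdorff. -/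
theorem dS_metric_and_topology {S : Type*} (F : ℕ → Set S)
    (h0 : F 0 = ∅) (hmono : ∀ i, F i ⊆ F (i + 1)) (hunion : (⋃ i, F i) = Set.univ)
    (hfin : ∀ i, (F i).Finite) :
    (∀ r r' : TO S, dS F r r' = 0 ↔ r = r') ∧
    (∀ r r' : TO S, dS F r r' = dS F r' r) ∧
    (∀ r r' r'' : TO S, dS F r r'' ≤ dS F r r' + dS F r' r'') ∧
    (∀ U : Set (TO S), IsOpen U ↔ ∀ r ∈ U, ∃ ε > 0, {r' : TO S | dS F r r' < ε} ⊆ U) ∧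
    T2Space (TO S) := by
  refine ⟨?_, ?_, ?_, ?_, ?_⟩
  · -- dS = 0 ↔ eq
    intro r r'
    constructor
    · intro h
      by_contra hne
      rw [dS_of_ne hne] at h
      exact (zpow_pos (by norm_num : (0:ℝ) < 2) _).ne' h
    · intro h; rw [h, dS_self]
  · -- symmetry
    intro r r'
    by_cases h : r = r'
    · rw [h]
    · rw [dS_of_ne h, dS_of_ne (Ne.symm h), agA_symm]
  · -- triangle
    intro r r' r''
    refine le_trans (dS_ultra h0 hunion hmono r r' r'') ?_
    rcases max_cases (dS F r r') (dS F r' r'') with ⟨h, _⟩ | ⟨h, _⟩ <;> rw [h]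
    · linarith [dS_nonneg (F := F) r' r'']
    · linarith [dS_nonneg (F := F) r r']
  · -- topology
    intro U
    constructor
    · -- open → metric open
      intro hU
      induction hU with
      | basic V hV =>
        obtain ⟨a, b, rfl⟩ := hV
        intro r hr
        obtain ⟨N, haN, hbN⟩ := exists_level hunion hmono a b
        refine ⟨(2 : ℝ) ^ (-(N : ℤ)), by positivity, fun r' hr' => ?_⟩
        simp only [Set.mem_setOf_eq] at hr' ⊢
        by_cases hne : r = r'
        · exact hne ▸ hr
        · exact (mem_agA_of_dS_lt h0 hunion hmono hr' hne a haN b hbN).mp hr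
      | univ => exact fun r _ => ⟨1, one_pos, fun _ _ => Set.mem_univ _⟩
      | inter V W _ _ ihV ihW =>
        intro r hr
        obtain ⟨ε1, hε1, h1⟩ := ihV r hr.1
        obtain ⟨ε2, hε2, h2⟩ := ihW r hr.2
        refine ⟨min ε1 ε2, lt_min hε1 hε2, fun r' hr' => ?_⟩
        simp only [Set.mem_setOf_eq] at hr'
        exact ⟨h1 (show dS F r r' < ε1 from lt_of_lt_of_le hr' (min_le_left ε1 ε2)),
          h2 (show dS F r r' < ε2 from lt_of_lt_of_le hr' (min_le_right ε1 ε2))⟩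
      | sUnion 𝒮 _ ih =>
        intro r hr
        obtain ⟨V, hV, hrV⟩ := hr
        obtain ⟨ε, hε, h⟩ := ih V hV r hrV
        exact ⟨ε, hε, fun r' hr' => ⟨V, hV, h hr'⟩⟩
    · -- metric open → open
      intro hU
      have key : ∀ r ∈ U, ∃ V : Set (TO S), IsOpen V ∧ r ∈ V ∧ V ⊆ U := by
        intro r hr
        obtain ⟨ε, hε, hball⟩ := hU r hr
        obtain ⟨N, hN⟩ := exists_pow_lt_of_lt_one hε (by norm_num : (1:ℝ)/2 < 1)
        have hN' : (2 : ℝ) ^ (-(N : ℤ)) < ε := by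
          have heq : (2 : ℝ) ^ (-(N : ℤ)) = (1/2) ^ N := by
            rw [zpow_neg, zpow_natCast, one_div, inv_pow]
          rw [heq]; exact hN
        refine ⟨⋂ a ∈ F N, ⋂ b ∈ F N, {r' : TO S | r'.1 a b ↔ r.1 a b}, ?_, ?_, ?_⟩
        · refine (hfin N).isOpen_biInter fun a _ => (hfin N).isOpen_biInter fun b hb => ?_
          by_cases hab : r.1 a b
          · have : {r' : TO S | r'.1 a b ↔ r.1 a b} = {r' : TO S | r'.1 a b} := by
              ext r'; simp [hab]
            rw [this]; exact subbasic_open a b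
          · have hne : a ≠ b := fun h => hab (h ▸ (r.2.2.2 a a).elim id id)
            have : {r' : TO S | r'.1 a b ↔ r.1 a b} = {r' : TO S | r'.1 b a} := by
              ext r'
              simp only [Set.mem_setOf_eq, iff_iff_implies_and_implies]
              constructor
              · intro ⟨h1, _⟩
                rcases r'.2.2.2 a b with h' | h'
                · exact absurd (h1 h') hab
                · exact h'
              · intro hba
                constructor
                · intro h'; exact absurd (r'.2.1 a b h' hba) hne
                · intro h'; exact absurd h' hab
            rw [this]; exact subbasic_open b a
        · simp only [Set.mem_iInter]
          intro a _ b _; exact Iff.rfl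
        · intro r' hr'
          apply hball
          simp only [Set.mem_setOf_eq]
          have hmem : N ∈ agA F r r' := by
            intro a ha b hb
            simp only [Set.mem_iInter, Set.mem_setOf_eq] at hr'
            exact (hr' a ha b hb).symm
          exact lt_of_le_of_lt (dS_le_of_mem hunion hmono hmem) hN'
      have hUeq : U = ⋃₀ {V | IsOpen V ∧ V ⊆ U} := by
        apply Set.Subset.antisymm
        · intro r hr
          obtain ⟨V, hVo, hrV, hVU⟩ := key r hr
          exact ⟨V, ⟨hVo, hVU⟩, hrV⟩
        · intro r ⟨V, ⟨_, hVU⟩, hrV⟩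
          exact hVU hrV
      rw [hUeq]
      exact isOpen_sUnion fun V hV => hV.1
  · -- T2
    refine ⟨fun r r' hne => ?_⟩
    obtain ⟨a, b, hab⟩ := exists_witness hne
    rw [iff_iff_implies_and_implies, not_and_or] at hab
    have main : ∀ (s t : TO S), s.1 a b → ¬t.1 a b →
        ∃ u v : Set (TO S), IsOpen u ∧ IsOpen v ∧ s ∈ u ∧ t ∈ v ∧ Disjoint u v := by
      intro s t hs ht
      have hne' : a ≠ b := fun h => ht (h ▸ (t.2.2.2 a a).elim id id)
      have htba : t.1 b a := (t.2.2.2 a b).resolve_left ht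
      refine ⟨{u : TO S | u.1 a b}, {u : TO S | u.1 b a}, subbasic_open a b,
        subbasic_open b a, hs, htba, Set.disjoint_left.mpr fun u hu1 hu2 => ?_⟩
      exact hne' (u.2.1 a b hu1 hu2)
    rcases hab with h | h
    · push_neg at h
      exact main r r' h.1 h.2
    · push_neg at h
      obtain ⟨u, v, hu, hv, hru, hrv, hd⟩ := main r' r h.1 h.2
      exact ⟨v, u, hv, hu, hrv, hru, hd.symm⟩
end

section
/- Let E ⊆ K[X] and 𝔖 ⊆ TO(M). Then MIN_E(𝔖) is a closed subset of 𝔖 (in the subspace topology). Hence, if 𝔖 is closed in TO(M), then MIN_E(𝔖) is compact. -/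
/-- Monomials of `K[X_1,…,X_t]`, identified with their exponent vectors `ν ∈ ℕ^t`. -/
abbrev Mon (t : ℕ) := Fin t →₀ ℕ

/-- `LM` is a leading-monomial function: for each total ordering `r` on monomials and each
nonzero polynomial `p`, `LM r p` is the `r`-maximal element of the support of `p`. -/
def IsLM (K : Type*) [Field K] (t : ℕ)
    (LM : TO (Mon t) → MvPolynomial (Fin t) K → Mon t) : Prop :=
  ∀ (r : TO (Mon t)) (p : MvPolynomial (Fin t) K), p ≠ 0 →
    LM r p ∈ p.support ∧ ∀ m ∈ p.support, r.1 m (LM r p)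

/-- The leading monomial ideal `LM_≤(E)` of a subset `E ⊆ K[X]`: the ideal generated by the
leading monomials of the nonzero elements of `E`. -/
noncomputable def LMideal (K : Type*) [Field K] (t : ℕ)
    (LM : TO (Mon t) → MvPolynomial (Fin t) K → Mon t)
    (r : TO (Mon t)) (E : Set (MvPolynomial (Fin t) K)) : Ideal (MvPolynomial (Fin t) K) :=
  Ideal.span {q | ∃ e ∈ E, e ≠ 0 ∧ q = MvPolynomial.monomial (LM r e) (1 : K)}

/-- `MIN_E(𝔖)`: the set of orderings `≤ ∈ 𝔖` such that `LM_≤(E)` is minimal with respect to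
inclusion among the leading monomial ideals `{LM_≤'(E) : ≤' ∈ 𝔖}`. -/
def MINset (K : Type*) [Field K] (t : ℕ)
    (LM : TO (Mon t) → MvPolynomial (Fin t) K → Mon t)
    (E : Set (MvPolynomial (Fin t) K)) (S : Set (TO (Mon t))) : Set (TO (Mon t)) :=
  {r | r ∈ S ∧ ∀ r' ∈ S, LMideal K t LM r' E ≤ LMideal K t LM r E →
    LMideal K t LM r' E = LMideal K t LM r E}


open TopologicalSpace Topology

section TOspace
variable {S : Type*}

lemma TO.refl (r : TO S) (a : S) : r.1 a a := (r.2.2.2 a a).elim id id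

lemma isOpen_U (a b : S) : IsOpen {r : TO S | r.1 a b} :=
  isOpen_generateFrom_of_mem ⟨a, b, rfl⟩

lemma isClosed_U (a b : S) : IsClosed {r : TO S | r.1 a b} := by
  rw [← isOpen_compl_iff]
  by_cases h : a = b
  · subst h
    convert isOpen_empty
    ext r; simp [TO.refl r a]
  · convert isOpen_U b a using 1
    ext r
    simp only [Set.mem_compl_iff, Set.mem_setOf_eq]
    constructor
    · intro hn; exact (r.2.2.2 a b).resolve_left hn
    · intro hba hab; exact h (r.2.1 a b hab hba)

noncomputable def toBoolFn (r : TO S) : S × S → Bool :=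
  fun p => @decide (r.1 p.1 p.2) (Classical.dec _)

lemma toBoolFn_eq_true {r : TO S} {a b : S} : toBoolFn r (a, b) = true ↔ r.1 a b := by
  simp [toBoolFn]

lemma isClopen_cyl (p : S × S) : IsClopen {f : S × S → Bool | f p = true} := by
  have : {f : S × S → Bool | f p = true} = (fun f : S × S → Bool => f p) ⁻¹' {true} := by
    ext f; simp
  rw [this]
  exact (isClopen_discrete {true}).preimage (continuous_apply p)

lemma isClosedEmbedding_toBoolFn : IsClosedEmbedding (toBoolFn (S := S)) := by
  refine ⟨⟨⟨?_⟩, ?_⟩, ?_⟩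
  · -- inducing
    · refine le_antisymm ?_ ?_
      · -- TOTopology ≤ induced, i.e. continuity
        rw [← continuous_iff_le_induced]
        refine continuous_pi fun p => continuous_discrete_rng.mpr fun b => ?_
        cases b
        · have : (fun r : TO S => toBoolFn r p) ⁻¹' {false} = {r : TO S | r.1 p.1 p.2}ᶜ := by
            ext r; simp [toBoolFn]
          rw [this]; exact (isClosed_U p.1 p.2).isOpen_compl
        · have : (fun r : TO S => toBoolFn r p) ⁻¹' {true} = {r : TO S | r.1 p.1 p.2} := by
            ext r; simp [toBoolFn]
          rw [this]; exact isOpen_U p.1 p.2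
      · refine le_generateFrom ?_
        rintro _ ⟨a, b, rfl⟩
        have : {r : TO S | r.1 a b} = toBoolFn ⁻¹' {f | f (a, b) = true} := by
          ext r; simp [toBoolFn]
        rw [this]
        exact isOpen_induced (isClopen_cyl (a, b)).2
  · -- injective
    intro r r' h
    apply Subtype.ext
    funext a b
    apply propext
    rw [← toBoolFn_eq_true (r := r), ← toBoolFn_eq_true (r := r'), h]
  · -- closed range
    have hrange : Set.range (toBoolFn (S := S)) =
        ({f : S × S → Bool | ∀ a b, f (a,b) = true → f (b,a) = true → a = b} ∩
         {f | ∀ a b c, f (a,b) = true → f (b,c) = true → f (a,c) = true} ∩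
         {f | ∀ a b, f (a,b) = true ∨ f (b,a) = true}) := by
      ext f
      constructor
      · rintro ⟨r, rfl⟩
        refine ⟨⟨fun a b hab hba => r.2.1 a b ?_ ?_, fun a b c hab hbc => ?_⟩, fun a b => ?_⟩
        · exact toBoolFn_eq_true.mp hab
        · exact toBoolFn_eq_true.mp hba
        · exact toBoolFn_eq_true.mpr (r.2.2.1 a b c (toBoolFn_eq_true.mp hab) (toBoolFn_eq_true.mp hbc))
        · rcases r.2.2.2 a b with h | h
          · exact Or.inl (toBoolFn_eq_true.mpr h)
          · exact Or.inr (toBoolFn_eq_true.mpr h)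
      · rintro ⟨⟨h1, h2⟩, h3⟩
        refine ⟨⟨fun a b => f (a,b) = true, h1, h2, h3⟩, ?_⟩
        funext p
        simp [toBoolFn]
    rw [hrange]
    refine IsClosed.inter (IsClosed.inter ?_ ?_) ?_
    · have : {f : S × S → Bool | ∀ a b, f (a,b) = true → f (b,a) = true → a = b} =
          ⋂ (a : S), ⋂ (b : S), {f : S × S → Bool | f (a,b) = true → f (b,a) = true → a = b} := by
        ext f; simp
      rw [this]
      refine isClosed_iInter fun a => isClosed_iInter fun b => ?_
      by_cases h : a = b
      · subst h; convert isClosed_univ; ext f; simp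
      · have : {f : S × S → Bool | f (a,b) = true → f (b,a) = true → a = b} =
            ({f : S × S → Bool | f (a,b) = true} ∩ {f | f (b,a) = true})ᶜ := by
          ext f; simp only [Set.mem_setOf_eq, Set.mem_compl_iff, Set.mem_inter_iff]
          tauto
        rw [this]
        exact (IsOpen.inter (isClopen_cyl _).2 (isClopen_cyl _).2).isClosed_compl
    · have : {f : S × S → Bool | ∀ a b c, f (a,b) = true → f (b,c) = true → f (a,c) = true} =
          ⋂ (a : S), ⋂ (b : S), ⋂ (c : S),
            (({f : S × S → Bool | f (a,b) = true} ∩ {f | f (b,c) = true})ᶜ ∪ {f | f (a,c) = true}) := by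
        ext f
        simp only [Set.mem_setOf_eq, Set.mem_iInter, Set.mem_union, Set.mem_compl_iff,
          Set.mem_inter_iff]
        constructor
        · intro h a b c; by_cases hab : f (a,b) = true <;> by_cases hbc : f (b,c) = true <;> tauto
        · intro h a b c hab hbc; rcases h a b c with h' | h' <;> tauto
      rw [this]
      refine isClosed_iInter fun a => isClosed_iInter fun b => isClosed_iInter fun c => ?_
      exact IsClosed.union (IsOpen.inter (isClopen_cyl _).2 (isClopen_cyl _).2).isClosed_compl
        (isClopen_cyl _).1
    · have : {f : S × S → Bool | ∀ a b, f (a,b) = true ∨ f (b,a) = true} =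
          ⋂ (a : S), ⋂ (b : S), ({f : S × S → Bool | f (a,b) = true} ∪ {f | f (b,a) = true}) := by
        ext f; simp
      rw [this]
      exact isClosed_iInter fun a => isClosed_iInter fun b =>
        IsClosed.union (isClopen_cyl _).1 (isClopen_cyl _).1

instance TO.compactSpace : CompactSpace (TO S) := by
  rw [← isCompact_univ_iff]
  have h := isClosedEmbedding_toBoolFn (S := S)
  have : (Set.univ : Set (TO S)) = toBoolFn ⁻¹' (Set.range (toBoolFn (S := S))) := by
    ext r; simp
  rw [this]
  exact h.isCompact_preimage h.isClosed_range.isCompact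

end TOspace
section Main

variable {R : Type*} [CommRing R]

lemma exists_finset_span [IsNoetherianRing R] (G : Set R) :
    ∃ F : Finset R, ↑F ⊆ G ∧ Ideal.span (F : Set R) = Ideal.span G := by
  classical
  obtain ⟨T, hT⟩ := (isNoetherian_def.mp inferInstance (Ideal.span G) : (Ideal.span G).FG)
  have hmem : ∀ g ∈ T, ∃ Fg : Finset R, ↑Fg ⊆ G ∧ g ∈ Ideal.span (Fg : Set R) := by
    intro g hg
    have : g ∈ Ideal.span G := by
      rw [← hT]; exact Ideal.subset_span hg
    exact Submodule.mem_span_finite_of_mem_span this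
  choose Fg hFgsub hFgmem using hmem
  refine ⟨T.attach.biUnion (fun g => Fg g g.2), ?_, ?_⟩
  · intro x hx
    simp only [Finset.coe_biUnion, Set.mem_iUnion, Finset.mem_coe] at hx
    obtain ⟨g, _, hx⟩ := hx
    exact hFgsub g g.2 hx
  · apply le_antisymm
    · apply Ideal.span_mono
      intro x hx
      simp only [Finset.coe_biUnion, Set.mem_iUnion, Finset.mem_coe] at hx
      obtain ⟨g, _, hx⟩ := hx
      exact hFgsub g g.2 hx
    · rw [← hT, Submodule.span_le]
      intro g hg
      refine Submodule.span_mono ?_ (hFgmem g hg)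
      intro x hx
      simp only [Finset.coe_biUnion, Set.mem_iUnion, Finset.mem_coe]
      exact ⟨⟨g, hg⟩, Finset.mem_attach _ _, hx⟩

end Main

section MainThm

variable (K : Type*) [Field K] (t : ℕ)
  (LM : TO (Mon t) → MvPolynomial (Fin t) K → Mon t)

/-- the open set of orderings agreeing with `r` on the leading monomial of `e`. -/
def Vset (r : TO (Mon t)) (e : MvPolynomial (Fin t) K) : Set (TO (Mon t)) :=
  {s : TO (Mon t) | ∀ m ∈ e.support, s.1 m (LM r e)}

lemma isOpen_Vset (r : TO (Mon t)) (e : MvPolynomial (Fin t) K) :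
    IsOpen (Vset K t LM r e) := by
  have : Vset K t LM r e = ⋂ m ∈ e.support, {s : TO (Mon t) | s.1 m (LM r e)} := by
    ext s; simp [Vset]
  rw [this]
  exact isOpen_biInter_finset fun m _ => isOpen_U m (LM r e)

lemma mem_Vset_self (hLM : IsLM K t LM) (r : TO (Mon t)) {e : MvPolynomial (Fin t) K}
    (he : e ≠ 0) : r ∈ Vset K t LM r e :=
  fun m hm => (hLM r e he).2 m hm

lemma LM_eq_of_mem_Vset (hLM : IsLM K t LM) {r s : TO (Mon t)} {e : MvPolynomial (Fin t) K}
    (he : e ≠ 0) (hs : s ∈ Vset K t LM r e) : LM s e = LM r e := by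
  apply s.2.1
  · exact hs (LM s e) (hLM s e he).1
  · exact (hLM s e he).2 (LM r e) (hLM r e he).1

end MainThm

/-- For `E ⊆ K[X]` and `𝔖 ⊆ TO(M)`, the set `MIN_E(𝔖)` of minimalizers of `E` in `𝔖` is a
closed subset of `𝔖` (in the subspace topology); hence, if `𝔖` is closed in `TO(M)`, then
`MIN_E(𝔖)` is compact. -/
theorem MINset_isClosed_isCompact (K : Type*) [Field K] (t : ℕ) (ht : 1 ≤ t)
    (LM : TO (Mon t) → MvPolynomial (Fin t) K → Mon t) (hLM : IsLM K t LM)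
    (E : Set (MvPolynomial (Fin t) K)) (S : Set (TO (Mon t))) :
    IsClosed {x : S | (x : TO (Mon t)) ∈ MINset K t LM E S} ∧
    (IsClosed S → IsCompact (MINset K t LM E S)) := by
  classical
  have hclosed : IsClosed {x : S | (x : TO (Mon t)) ∈ MINset K t LM E S} := by
    rw [← isOpen_compl_iff, isOpen_iff_forall_mem_open]
    rintro ⟨r, hrS⟩ hx
    simp only [Set.mem_compl_iff, Set.mem_setOf_eq, MINset] at hx
    push_neg at hx
    obtain ⟨r', hr'S, hle, hne⟩ := hx hrS
    have he0 : ∃ e0, e0 ∈ E ∧ e0 ≠ 0 ∧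
        (MvPolynomial.monomial (LM r e0) (1:K)) ∉ LMideal K t LM r' E := by
      by_contra h
      push_neg at h
      apply hne
      refine le_antisymm hle ?_
      rw [LMideal, Ideal.span_le]
      rintro q ⟨e, heE, hene, rfl⟩
      exact h e heE hene
    obtain ⟨e0, he0E, he0ne, he0not⟩ := he0
    obtain ⟨Q, hQsub, hQspan⟩ := exists_finset_span
      {q | ∃ e ∈ E, e ≠ 0 ∧ q = MvPolynomial.monomial (LM r e) (1 : K)}
    have hQ : ∀ q ∈ Q, ∃ e, e ∈ E ∧ e ≠ 0 ∧ q = MvPolynomial.monomial (LM r e) (1 : K) := by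
      intro q hq
      obtain ⟨e, he, h1, h2⟩ := hQsub (Finset.mem_coe.mpr hq)
      exact ⟨e, he, h1, h2⟩
    choose ee heE hene heq using hQ
    set V : Set (TO (Mon t)) :=
      Vset K t LM r e0 ∩ ⋂ (q : {q // q ∈ Q}), Vset K t LM r (ee q q.2) with hVdef
    have hVopen : IsOpen V := (isOpen_Vset K t LM r e0).inter
      (isOpen_iInter_of_finite fun q => isOpen_Vset K t LM r (ee q q.2))
    have hrV : r ∈ V := ⟨mem_Vset_self K t LM hLM r he0ne,
      Set.mem_iInter.mpr fun q => mem_Vset_self K t LM hLM r (hene q q.2)⟩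
    have hkey : ∀ s : TO (Mon t), s ∈ V → s ∉ MINset K t LM E S := by
      intro s hsV hsMIN
      have hle_rs : LMideal K t LM r E ≤ LMideal K t LM s E := by
        rw [LMideal, ← hQspan, Ideal.span_le]
        intro q hq
        rw [Finset.mem_coe] at hq
        have hq' : q = MvPolynomial.monomial (LM s (ee q hq)) (1 : K) := by
          rw [LM_eq_of_mem_Vset K t LM hLM (hene q hq)
            (Set.mem_iInter.mp hsV.2 ⟨q, hq⟩)]
          exact heq q hq
        rw [hq']
        exact Ideal.subset_span ⟨ee q hq, heE q hq, hene q hq, rfl⟩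
      have heqid := hsMIN.2 r' hr'S (hle.trans hle_rs)
      apply he0not
      rw [heqid]
      have h1 : LM s e0 = LM r e0 := LM_eq_of_mem_Vset K t LM hLM he0ne hsV.1
      exact Ideal.subset_span ⟨e0, he0E, he0ne, by rw [h1]⟩
    refine ⟨Subtype.val ⁻¹' V, ?_, hVopen.preimage continuous_subtype_val, hrV⟩
    intro y hy
    simp only [Set.mem_compl_iff, Set.mem_setOf_eq]
    exact hkey y.1 hy
  refine ⟨hclosed, fun hS => ?_⟩
  have hScomp : IsCompact S := hS.isCompact
  haveI : CompactSpace ↥S := isCompact_iff_compactSpace.mp hScomp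
  have h2 : IsCompact {x : S | (x : TO (Mon t)) ∈ MINset K t LM E S} := hclosed.isCompact
  have himg := h2.image continuous_subtype_val
  have himeq : Subtype.val '' {x : S | (x : TO (Mon t)) ∈ MINset K t LM E S}
      = MINset K t LM E S := by
    ext v
    constructor
    · rintro ⟨x, hx, rfl⟩; exact hx
    · intro hv; exact ⟨⟨v, hv.1⟩, hv, rfl⟩
  rwa [himeq] at himg
end

section
/- For each subset E ⊆ K[X] and each subset 𝔖 ⊆ TO(M) that is closed in TO(M), the set of minimal elements (with respect to inclusion) of the set of ideals {LM_≤(E) : ≤ ∈ 𝔖} is finite; that is, there exist at most finitely many distinct minimal leading monomial ideals of E from 𝔖. -/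
lemma span_fg_subset {R M : Type*} [Semiring R] [AddCommMonoid M] [Module R M]
    {s : Set M} (h : (Submodule.span R s).FG) :
    ∃ u : Set M, u.Finite ∧ u ⊆ s ∧ Submodule.span R u = Submodule.span R s := by
  obtain ⟨T, hT⟩ := h
  have hx : ∀ x ∈ (T : Set M), x ∈ Submodule.span R s := fun x hx =>
    hT ▸ Submodule.subset_span hx
  choose f hf1 hf2 using fun x (hx' : x ∈ (T : Set M)) =>
    Submodule.mem_span_finite_of_mem_span (hx x hx')
  refine ⟨⋃ x : (T : Set M), (f x.1 x.2 : Set M), ?_, ?_, ?_⟩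
  · have : Finite ((T : Set M) : Type _) := T.finite_toSet.to_subtype
    exact Set.finite_iUnion fun x => (f x.1 x.2).finite_toSet
  · exact Set.iUnion_subset fun x => hf1 x.1 x.2
  · refine le_antisymm (Submodule.span_mono (Set.iUnion_subset fun x => hf1 x.1 x.2)) ?_
    rw [← hT]
    refine Submodule.span_le.2 fun x hx' => ?_
    exact Submodule.span_mono
      (Set.subset_iUnion (fun y : (T : Set M) => (f y.1 y.2 : Set M)) ⟨x, hx'⟩) (hf2 x hx')

lemma TO_compact_of_closed {S : Type*} {C : Set (TO S)} (hC : IsClosed C) : IsCompact C := by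
  rw [isCompact_iff_ultrafilter_le_nhds]
  intro f hf
  have hCf : C ∈ f := Filter.le_principal_iff.mp hf
  have htot : IsTotalOrdering (fun a b : S => {r : TO S | r.1 a b} ∈ f) := by
    refine ⟨?_, ?_, ?_⟩
    · intro a b hab hba
      obtain ⟨r, hr⟩ := Ultrafilter.nonempty_of_mem (Filter.inter_mem hab hba)
      exact r.2.1 a b hr.1 hr.2
    · intro a b c hab hbc
      exact Filter.mem_of_superset (Filter.inter_mem hab hbc)
        (fun r hr => r.2.2.1 a b c hr.1 hr.2)
    · intro a b
      have huniv : {r : TO S | r.1 a b} ∪ {r : TO S | r.1 b a} = Set.univ := by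
        ext r; simpa using r.2.2.2 a b
      exact (Ultrafilter.union_mem_iff).mp (huniv ▸ Filter.univ_mem)
  set r₀ : TO S := ⟨_, htot⟩ with hr₀
  have hopen : ∀ t : Set (TO S), IsOpen t → r₀ ∈ t → t ∈ f := by
    intro t ht
    have ht' : TopologicalSpace.GenerateOpen {U | ∃ a b : S, U = {r : TO S | r.1 a b}} t := ht
    clear ht
    induction ht' with
    | basic u hu => obtain ⟨a, b, rfl⟩ := hu; exact fun hr => hr
    | univ => exact fun _ => Filter.univ_mem
    | inter u v _ _ ihu ihv => exact fun hr => Filter.inter_mem (ihu hr.1) (ihv hr.2)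
    | sUnion T _ ih =>
      rintro ⟨u, huT, hru⟩
      exact Filter.mem_of_superset (ih u huT hru) (Set.subset_sUnion_of_mem huT)
  have hle : (f : Filter (TO S)) ≤ nhds r₀ := by
    intro s hs
    obtain ⟨u, hus, huo, hr₀u⟩ := mem_nhds_iff.mp hs
    exact Filter.mem_of_superset (hopen u huo hr₀u) hus
  have hcl : r₀ ∈ C := by
    have : ClusterPt r₀ (Filter.principal C) :=
      Filter.neBot_of_le (le_inf hle hf)
    exact hC.closure_eq ▸ mem_closure_iff_clusterPt.mpr this
  exact ⟨r₀, hcl, hle⟩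

/-- For each `E ⊆ K[X]` and each closed `𝔖 ⊆ TO(M)`, there are at most finitely many distinct
minimal (w.r.t. inclusion) leading monomial ideals of `E` from `𝔖`. -/
theorem minimal_LMideals_finite (K : Type*) [Field K] (t : ℕ) (ht : 1 ≤ t)
    (LM : TO (Mon t) → MvPolynomial (Fin t) K → Mon t) (hLM : IsLM K t LM)
    (E : Set (MvPolynomial (Fin t) K)) (S : Set (TO (Mon t))) (hS : IsClosed S) :
    {I : Ideal (MvPolynomial (Fin t) K) |
      (∃ r ∈ S, I = LMideal K t LM r E) ∧
      ∀ J : Ideal (MvPolynomial (Fin t) K),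
        (∃ r ∈ S, J = LMideal K t LM r E) → J ≤ I → J = I}.Finite := by
  classical
  have hcomp : IsCompact S := TO_compact_of_closed hS
  have hLMopen : ∀ (e : MvPolynomial (Fin t) K), e ≠ 0 → ∀ (r : TO (Mon t)),
      IsOpen {r' : TO (Mon t) | LM r' e = LM r e} := by
    intro e he r
    have hmem : LM r e ∈ e.support := (hLM r e he).1
    have heq : {r' : TO (Mon t) | LM r' e = LM r e}
        = ⋂ m ∈ e.support, {r' : TO (Mon t) | r'.1 m (LM r e)} := by
      ext r'
      simp only [Set.mem_iInter, Set.mem_setOf_eq]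
      constructor
      · intro h m hm; exact h ▸ (hLM r' e he).2 m hm
      · intro h
        exact r'.2.1 _ _ (h _ (hLM r' e he).1) ((hLM r' e he).2 _ hmem)
    rw [heq]
    exact isOpen_biInter_finset fun m _ =>
      TopologicalSpace.isOpen_generateFrom_of_mem ⟨m, LM r e, rfl⟩
  have key : ∀ r : TO (Mon t), ∃ V : Set (TO (Mon t)), IsOpen V ∧ r ∈ V ∧
      ∀ r' ∈ V, LMideal K t LM r E ≤ LMideal K t LM r' E := by
    intro r
    have hfg : (Submodule.span (MvPolynomial (Fin t) K)
        {q | ∃ e ∈ E, e ≠ 0 ∧ q = MvPolynomial.monomial (LM r e) (1 : K)}).FG :=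
      IsNoetherian.noetherian _
    obtain ⟨u, hufin, hus, hspan⟩ := span_fg_subset hfg
    choose g hgE hg0 hgq using fun q (hq : q ∈ u) => hus hq
    have : Finite u := hufin.to_subtype
    refine ⟨⋂ q : u, {r' : TO (Mon t) | LM r' (g q.1 q.2) = LM r (g q.1 q.2)},
      isOpen_iInter_of_finite fun q => hLMopen _ (hg0 q.1 q.2) r, ?_, ?_⟩
    · exact Set.mem_iInter.mpr fun q => rfl
    · intro r' hr'
      rw [LMideal, Ideal.span, ← hspan]
      refine Submodule.span_le.2 fun q hq => ?_
      have hq' : LM r' (g q hq) = LM r (g q hq) := Set.mem_iInter.mp hr' ⟨q, hq⟩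
      have : q = MvPolynomial.monomial (LM r' (g q hq)) (1 : K) := by
        rw [hq']; exact hgq q hq
      exact Ideal.subset_span ⟨g q hq, hgE q hq, hg0 q hq, this⟩
  choose V hVo hVm hVle using key
  obtain ⟨T, hTS, hTcov⟩ := hcomp.elim_nhds_subcover V (fun r _ => (hVo r).mem_nhds (hVm r))
  apply Set.Finite.subset (T.finite_toSet.image (fun r => LMideal K t LM r E))
  rintro I ⟨⟨r, hrS, rfl⟩, hmin⟩
  obtain ⟨i, hiT, hri⟩ := Set.mem_iUnion₂.mp (hTcov hrS)
  have h2 : LMideal K t LM i E = LMideal K t LM r E :=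
    hmin _ ⟨i, hTS i hiT, rfl⟩ (hVle i r hri)
  exact ⟨i, hiT, h2⟩
end

section
/- The set DO(M) of degree orderings of K[X] is a closed subset of TO(M), and hence DO(M) is compact. -/
/-- `DO(M)`: the set of degree orderings on the monomials of `K[X]`, i.e. total orderings `≤`
with `deg(LM_≤(p)) = deg(p)` for every nonzero polynomial `p`. -/
def DOset (K : Type*) [Field K] (t : ℕ)
    (LM : TO (Mon t) → MvPolynomial (Fin t) K → Mon t) : Set (TO (Mon t)) :=
  {r | ∀ p : MvPolynomial (Fin t) K, p ≠ 0 →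
    ((LM r p).sum fun _ e => e) = p.totalDegree}


lemma TO_subbasic_isOpen {S : Type*} (a b : S) : IsOpen {r : TO S | r.1 a b} :=
  TopologicalSpace.isOpen_generateFrom_of_mem ⟨a, b, rfl⟩

instance TO_compact (S : Type*) : CompactSpace (TO S) := by
  refine ⟨?_⟩
  rw [isCompact_iff_ultrafilter_le_nhds]
  intro F _
  set r : S → S → Prop := fun a b => {s : TO S | s.1 a b} ∈ F with hr
  have htot : IsTotalOrdering r := by
    refine ⟨?_, ?_, ?_⟩
    · intro a b hab hba
      obtain ⟨s, h1, h2⟩ := F.nonempty_of_mem (Filter.inter_mem hab hba)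
      exact s.2.1 a b h1 h2
    · intro a b c hab hbc
      exact Filter.mem_of_superset (Filter.inter_mem hab hbc)
        (fun s ⟨h1, h2⟩ => s.2.2.1 a b c h1 h2)
    · intro a b
      by_cases h : {s : TO S | s.1 a b} ∈ F
      · exact Or.inl h
      · right
        have hc : {s : TO S | s.1 a b}ᶜ ∈ F := Ultrafilter.compl_mem_iff_notMem.2 h
        exact Filter.mem_of_superset hc (fun s hs => (s.2.2.2 a b).resolve_left hs)
  refine ⟨⟨r, htot⟩, trivial, ?_⟩
  have hnhds : @nhds (TO S) (TOTopology S) ⟨r, htot⟩ =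
      ⨅ s ∈ {s | (⟨r, htot⟩ : TO S) ∈ s ∧ s ∈ {U | ∃ a b : S, U = {x : TO S | x.1 a b}}},
        Filter.principal s := TopologicalSpace.nhds_generateFrom
  rw [hnhds, le_iInf₂_iff]
  rintro U ⟨hrU, a, b, rfl⟩
  exact Filter.le_principal_iff.2 hrU

/-- `DO(M)` is a closed subset of `TO(M)`, and hence compact. -/
theorem DOset_isClosed_isCompact (K : Type*) [Field K] (t : ℕ) (ht : 1 ≤ t)
    (LM : TO (Mon t) → MvPolynomial (Fin t) K → Mon t) (hLM : IsLM K t LM) :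
    IsClosed (DOset K t LM) ∧ IsCompact (DOset K t LM) := by
  have hclosed : IsClosed (DOset K t LM) := by
    rw [← isOpen_compl_iff]
    have hcompl : (DOset K t LM)ᶜ = ⋃ (p : MvPolynomial (Fin t) K) (_ : p ≠ 0)
        (m : Mon t) (_ : m ∈ p.support) (_ : (m.sum fun _ e => e) ≠ p.totalDegree),
        {r : TO (Mon t) | ∀ m' ∈ p.support, r.1 m' m} := by
      ext r
      simp only [Set.mem_compl_iff, DOset, Set.mem_setOf_eq, Set.mem_iUnion]
      constructor
      · intro h
        push_neg at h
        obtain ⟨p, hp, hdeg⟩ := h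
        exact ⟨p, hp, LM r p, (hLM r p hp).1, hdeg, (hLM r p hp).2⟩
      · rintro ⟨p, hp, m, hm, hdeg, hmax⟩ hDO
        have h1 := hLM r p hp
        have hme : m = LM r p := r.2.1 _ _ (h1.2 m hm) (hmax _ h1.1)
        exact hdeg (hme ▸ hDO p hp)
    rw [hcompl]
    refine isOpen_iUnion fun p => isOpen_iUnion fun _ => isOpen_iUnion fun m =>
      isOpen_iUnion fun _ => isOpen_iUnion fun _ => ?_
    have heq : {r : TO (Mon t) | ∀ m' ∈ p.support, r.1 m' m}
        = ⋂ m' ∈ (p.support : Set (Mon t)), {r : TO (Mon t) | r.1 m' m} := by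
      ext s; simp
    rw [heq]
    exact Set.Finite.isOpen_biInter p.support.finite_toSet
      fun m' _ => TO_subbasic_isOpen m' m
  exact ⟨hclosed, hclosed.isCompact⟩
end

section
/- If t > 1 (i.e. the number of indeterminates is at least 2), then the set DCO(M) = DO(M) ∩ CO(M) of degree-compatible orderings is nowhere dense in DO(M) (with its subspace topology); equivalently, the closure of DCO(M) in DO(M) has empty interior in DO(M). -/
/-- `CO(M)`: the set of compatible (semigroup) orderings on the monomials of `K[X]`, i.e.
total orderings `≤` with `X^υ ≤ X^ν → X^{υ+γ} ≤ X^{ν+γ}` for all exponent vectors. -/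
def COset (t : ℕ) : Set (TO (Mon t)) :=
  {r | ∀ υ ν γ : Mon t, r.1 υ ν → r.1 (υ + γ) (ν + γ)}

namespace DCOaux

variable {t : ℕ}

/-- total degree of a monomial -/
def deg (m : Mon t) : ℕ := m.sum fun _ e => e

lemma deg_single (i : Fin t) (n : ℕ) : deg (Finsupp.single i n) = n := by
  simp [deg]

lemma deg_add (m m' : Mon t) : deg (m + m') = deg m + deg m' := by
  classical
  simp [deg, Finsupp.sum_add_index']

lemma refl_of (r : TO (Mon t)) (a : Mon t) : r.1 a a := by
  rcases r.2.2.2 a a with h | h <;> exact h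

/-- an arbitrary auxiliary linear order on monomials (reflexive closure of a well order) -/
def W (m m' : Mon t) : Prop := WellOrderingRel m m' ∨ m = m'

lemma W_total (m m' : Mon t) : W m m' ∨ W m' m := by
  rcases trichotomous_of WellOrderingRel m m' with h | h | h
  · exact Or.inl (Or.inl h)
  · exact Or.inl (Or.inr h)
  · exact Or.inr (Or.inl h)

lemma W_antisymm {m m' : Mon t} : W m m' → W m' m → m = m' := by
  rintro (h | h) (h' | h')
  · exact absurd h' (asymm h)
  · exact h'.symm
  · exact h
  · exact h

lemma W_trans {m m' m'' : Mon t} : W m m' → W m' m'' → W m m'' := by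
  rintro (h | rfl) (h' | rfl)
  · exact Or.inl (_root_.trans h h')
  · exact Or.inl h
  · exact Or.inl h'
  · exact Or.inr rfl

/-- lexicographic-style order: compare the `i`-th exponent first, break ties by `W` -/
def L (i : Fin t) (m m' : Mon t) : Prop := m i < m' i ∨ (m i = m' i ∧ W m m')

lemma L_total (i : Fin t) (m m' : Mon t) : L i m m' ∨ L i m' m := by
  rcases lt_trichotomy (m i) (m' i) with h | h | h
  · exact Or.inl (Or.inl h)
  · rcases W_total m m' with h' | h'
    · exact Or.inl (Or.inr ⟨h, h'⟩)
    · exact Or.inr (Or.inr ⟨h.symm, h'⟩)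
  · exact Or.inr (Or.inl h)

lemma L_antisymm {i : Fin t} {m m' : Mon t} : L i m m' → L i m' m → m = m' := by
  rintro (h | ⟨h1, h2⟩) (h' | ⟨h1', h2'⟩)
  · omega
  · omega
  · omega
  · exact W_antisymm h2 h2'

lemma L_trans {i : Fin t} {m m' m'' : Mon t} : L i m m' → L i m' m'' → L i m m'' := by
  rintro (h | ⟨h1, h2⟩) (h' | ⟨h1', h2'⟩)
  · exact Or.inl (h.trans h')
  · exact Or.inl (by omega)
  · exact Or.inl (by omega)
  · exact Or.inr ⟨h1.trans h1', W_trans h2 h2'⟩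

open Classical in
/-- The within-level comparison used for the perturbed ordering: on level `d` use `L i`, on
level `d+1` use the reverse of `L i`, and elsewhere use the base ordering `r`. -/
noncomputable def E (r : TO (Mon t)) (i : Fin t) (d : ℕ) (m m' : Mon t) : Prop :=
  if deg m = d then L i m m' else if deg m = d + 1 then L i m' m else r.1 m m'

/-- The perturbed ordering: order by degree first, within a level use `E`. -/
noncomputable def R (r : TO (Mon t)) (i : Fin t) (d : ℕ) (m m' : Mon t) : Prop :=
  deg m < deg m' ∨ (deg m = deg m' ∧ E r i d m m')

lemma E_total (r : TO (Mon t)) (i : Fin t) (d : ℕ) {m m' : Mon t} (h : deg m = deg m') :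
    E r i d m m' ∨ E r i d m' m := by
  unfold E
  rw [← h]
  by_cases h1 : deg m = d
  · simp only [if_pos h1]; exact L_total i m m'
  · simp only [if_neg h1]
    by_cases h2 : deg m = d + 1
    · simp only [if_pos h2]
      rcases L_total i m m' with h' | h'
      · exact Or.inr h'
      · exact Or.inl h'
    · simp only [if_neg h2]
      exact r.2.2.2 m m'

lemma E_antisymm (r : TO (Mon t)) (i : Fin t) (d : ℕ) {m m' : Mon t} (h : deg m = deg m') :
    E r i d m m' → E r i d m' m → m = m' := by
  unfold E
  rw [← h]
  by_cases h1 : deg m = d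
  · simp only [if_pos h1]; exact L_antisymm
  · simp only [if_neg h1]
    by_cases h2 : deg m = d + 1
    · simp only [if_pos h2]
      exact fun a b => L_antisymm b a
    · simp only [if_neg h2]
      exact r.2.1 m m'

lemma E_trans (r : TO (Mon t)) (i : Fin t) (d : ℕ) {m m' m'' : Mon t}
    (h : deg m = deg m') (h' : deg m' = deg m'') :
    E r i d m m' → E r i d m' m'' → E r i d m m'' := by
  unfold E
  rw [← h]
  by_cases h1 : deg m = d
  · simp only [if_pos h1]; exact L_trans
  · simp only [if_neg h1]
    by_cases h2 : deg m = d + 1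
    · simp only [if_pos h2]
      exact fun a b => L_trans b a
    · simp only [if_neg h2]
      exact r.2.2.1 m m' m''

lemma R_isTotalOrdering (r : TO (Mon t)) (i : Fin t) (d : ℕ) :
    IsTotalOrdering (R r i d) := by
  refine ⟨?_, ?_, ?_⟩
  · rintro a b (h | ⟨h1, h2⟩) (h' | ⟨h1', h2'⟩)
    · omega
    · omega
    · omega
    · exact E_antisymm r i d h1 h2 h2'
  · rintro a b c (h | ⟨h1, h2⟩) (h' | ⟨h1', h2'⟩)
    · exact Or.inl (h.trans h')
    · exact Or.inl (by omega)
    · exact Or.inl (by omega)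
    · exact Or.inr ⟨h1.trans h1', E_trans r i d h1 h1' h2 h2'⟩
  · intro a b
    rcases lt_trichotomy (deg a) (deg b) with h | h | h
    · exact Or.inl (Or.inl h)
    · rcases E_total r i d h with h' | h'
      · exact Or.inl (Or.inr ⟨h, h'⟩)
      · exact Or.inr (Or.inr ⟨h.symm, h'⟩)
    · exact Or.inr (Or.inl h)

lemma R_of_base {r : TO (Mon t)} (href : ∀ m m' : Mon t, deg m < deg m' → r.1 m m')
    (i : Fin t) {d : ℕ} {a b : Mon t} (ha : deg a < d) (hb : deg b < d) (hab : r.1 a b) :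
    R r i d a b := by
  rcases lt_trichotomy (deg a) (deg b) with h | h | h
  · exact Or.inl h
  · refine Or.inr ⟨h, ?_⟩
    unfold E
    rw [if_neg (by omega), if_neg (by omega)]
    exact hab
  · have := r.2.1 _ _ hab (href _ _ h)
    rw [this] at h
    omega

lemma R_not_CO (r : TO (Mon t)) {i j : Fin t} (hij : i ≠ j) {d : ℕ} (hd : 1 ≤ d) :
    ¬ (∀ υ ν γ : Mon t, R r i d υ ν → R r i d (υ + γ) (ν + γ)) := by
  intro hco
  have hvi : ((Finsupp.single i (d-1) + Finsupp.single j 1 : Mon t)) i = d - 1 := by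
    rw [Finsupp.add_apply, Finsupp.single_eq_same, Finsupp.single_eq_of_ne' hij.symm]
    omega
  have hdv : deg (Finsupp.single i (d-1) + Finsupp.single j 1) = d := by
    rw [deg_add, deg_single, deg_single]; omega
  have h2 := hco (Finsupp.single i (d-1) + Finsupp.single j 1) (Finsupp.single i d)
    (Finsupp.single i 1) ?_
  · have hdvγ : deg (Finsupp.single i (d-1) + Finsupp.single j 1 + Finsupp.single i 1) = d + 1 := by
      rw [deg_add, hdv, deg_single]
    have hduγ : deg (Finsupp.single i d + Finsupp.single i 1) = d + 1 := by
      rw [deg_add, deg_single, deg_single]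
    have hvγi : ((Finsupp.single i (d-1) + Finsupp.single j 1 + Finsupp.single i 1 : Mon t)) i = d := by
      rw [Finsupp.add_apply, hvi, Finsupp.single_eq_same]; omega
    have huγi : ((Finsupp.single i d + Finsupp.single i 1 : Mon t)) i = d + 1 := by
      rw [Finsupp.add_apply, Finsupp.single_eq_same, Finsupp.single_eq_same]
    rcases h2 with h | ⟨h1, h2⟩
    · rw [hdvγ, hduγ] at h; omega
    · unfold E at h2
      rw [if_neg (by omega), if_pos hdvγ] at h2
      rcases h2 with h | ⟨h, _⟩ <;> rw [huγi, hvγi] at h <;> omega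
  · refine Or.inr ⟨by rw [hdv, deg_single], ?_⟩
    unfold E
    rw [if_pos hdv]
    exact Or.inl (by rw [hvi, Finsupp.single_eq_same]; omega)

variable {K : Type*} [Field K]

lemma DO_refines {LM : TO (Mon t) → MvPolynomial (Fin t) K → Mon t} (hLM : IsLM K t LM)
    {r : TO (Mon t)} (hr : r ∈ DOset K t LM) :
    ∀ m m' : Mon t, deg m < deg m' → r.1 m m' := by
  intro m m' hlt
  have hne : m ≠ m' := fun h => by rw [h] at hlt; exact lt_irrefl _ hlt
  set p : MvPolynomial (Fin t) K :=
    MvPolynomial.monomial m 1 + MvPolynomial.monomial m' 1 with hp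
  have hcm : p.coeff m = 1 := by
    simp [hp, MvPolynomial.coeff_monomial, Ne.symm hne]
  have hcm' : p.coeff m' = 1 := by
    simp [hp, MvPolynomial.coeff_monomial, hne]
  have hp0 : p ≠ 0 := fun h => by simp [h] at hcm
  have hms : m ∈ p.support := MvPolynomial.mem_support_iff.2 (by rw [hcm]; exact one_ne_zero)
  have hms' : m' ∈ p.support := MvPolynomial.mem_support_iff.2 (by rw [hcm']; exact one_ne_zero)
  obtain ⟨hLMmem, hLMmax⟩ := hLM r p hp0
  have hdeg : deg (LM r p) = p.totalDegree := hr p hp0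
  have hge : deg m' ≤ p.totalDegree := MvPolynomial.le_totalDegree hms'
  have hor : LM r p = m ∨ LM r p = m' := by
    have hc := MvPolynomial.mem_support_iff.1 hLMmem
    by_contra hcon
    push_neg at hcon
    rw [hp] at hc hcon
    simp [MvPolynomial.coeff_monomial, Ne.symm hcon.1, Ne.symm hcon.2] at hc
  rcases hor with h | h
  · rw [h] at hdeg; omega
  · rw [← h]; exact hLMmax m hms

lemma refines_DO {LM : TO (Mon t) → MvPolynomial (Fin t) K → Mon t} (hLM : IsLM K t LM)
    {r : TO (Mon t)} (h : ∀ m m' : Mon t, deg m < deg m' → r.1 m m') :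
    r ∈ DOset K t LM := by
  intro p hp0
  obtain ⟨hmem, hmax⟩ := hLM r p hp0
  have h1 : deg (LM r p) ≤ p.totalDegree := MvPolynomial.le_totalDegree hmem
  obtain ⟨b, hb, hbeq⟩ := p.support.exists_mem_eq_sup
    (MvPolynomial.support_nonempty.2 hp0) (fun s => s.sum fun _ e => e)
  have h3 : p.totalDegree = deg b := by rw [MvPolynomial.totalDegree]; exact hbeq
  have h2 : ¬ deg (LM r p) < deg b := by
    intro hlt
    have heq := r.2.1 _ _ (h _ _ hlt) (hmax b hb)
    rw [heq] at hlt; exact lt_irrefl _ hlt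
  show deg (LM r p) = p.totalDegree
  omega

end DCOaux

/-- If the number of indeterminates is at least `2`, then the set `DCO(M) = DO(M) ∩ CO(M)` of
degree-compatible orderings is nowhere dense in `DO(M)` (with its subspace topology). -/
theorem DCO_nowhereDense_in_DO (K : Type*) [Field K] (t : ℕ) (ht : 1 < t)
    (LM : TO (Mon t) → MvPolynomial (Fin t) K → Mon t) (hLM : IsLM K t LM) :
    IsNowhereDense {x : ↥(DOset K t LM) | (x : TO (Mon t)) ∈ COset t} := by
  classical
  have hCOclosed : IsClosed (COset t) := by
    rw [← isOpen_compl_iff]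
    have hrw : (COset t)ᶜ = ⋃ (υ : Mon t) (ν : Mon t) (γ : Mon t) (_ : υ ≠ ν),
        ({r : TO (Mon t) | r.1 υ ν} ∩ {r : TO (Mon t) | r.1 (ν + γ) (υ + γ)}) := by
      ext r
      simp only [Set.mem_compl_iff, COset, Set.mem_setOf_eq, Set.mem_iUnion, Set.mem_inter_iff]
      constructor
      · intro hnot
        push_neg at hnot
        obtain ⟨υ, ν, γ, h1, h2⟩ := hnot
        refine ⟨υ, ν, γ, ?_, h1, ?_⟩
        · rintro rfl; exact h2 (DCOaux.refl_of r _)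
        · rcases r.2.2.2 (υ + γ) (ν + γ) with h | h
          · exact absurd h h2
          · exact h
      · rintro ⟨υ, ν, γ, hne, h1, h2⟩
        intro hco
        have h3 := hco υ ν γ h1
        have h4 : υ + γ = ν + γ := r.2.1 _ _ h3 h2
        exact hne (add_right_cancel h4)
    rw [hrw]
    exact isOpen_iUnion fun υ => isOpen_iUnion fun ν => isOpen_iUnion fun γ =>
      isOpen_iUnion fun _ =>
      (TopologicalSpace.isOpen_generateFrom_of_mem
        (g := {U : Set (TO (Mon t)) | ∃ a b : Mon t, U = {r : TO (Mon t) | r.1 a b}})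
        ⟨υ, ν, rfl⟩).inter
        (TopologicalSpace.isOpen_generateFrom_of_mem
        (g := {U : Set (TO (Mon t)) | ∃ a b : Mon t, U = {r : TO (Mon t) | r.1 a b}})
        ⟨ν + γ, υ + γ, rfl⟩)
  have hSclosed : IsClosed {x : ↥(DOset K t LM) | (x : TO (Mon t)) ∈ COset t} :=
    hCOclosed.preimage continuous_subtype_val
  show interior (closure _) = ∅
  rw [hSclosed.closure_eq, Set.eq_empty_iff_forall_notMem]
  intro x hx
  obtain ⟨O, hOopen, hOeq⟩ := isOpen_induced_iff.1
    (isOpen_interior (s := {x : ↥(DOset K t LM) | (x : TO (Mon t)) ∈ COset t}))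
  have hxO : (x : TO (Mon t)) ∈ O := by
    rw [← hOeq] at hx
    exact hx
  have hbasis : TopologicalSpace.IsTopologicalBasis
      ((fun f : Set (Set (TO (Mon t))) => ⋂₀ f) '' {f : Set (Set (TO (Mon t))) | f.Finite ∧
        f ⊆ {U | ∃ a b : Mon t, U = {r : TO (Mon t) | r.1 a b}}}) :=
    TopologicalSpace.isTopologicalBasis_of_subbasis rfl
  obtain ⟨B, hBmem, hxB, hBO⟩ := hbasis.exists_subset_of_mem_open hxO hOopen
  obtain ⟨f, ⟨hfin, hsub⟩, rfl⟩ := hBmem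
  set g : Set (TO (Mon t)) → ℕ := fun U =>
    if h : ∃ a b : Mon t, U = {r : TO (Mon t) | r.1 a b} then
      max (DCOaux.deg h.choose) (DCOaux.deg h.choose_spec.choose) else 0 with hg
  obtain ⟨N, hN⟩ := (hfin.image g).bddAbove
  set d : ℕ := N + 1 with hdd
  set i : Fin t := ⟨0, by omega⟩ with hi
  set j : Fin t := ⟨1, ht⟩ with hj
  have hij : i ≠ j := by
    intro h
    rw [hi, hj, Fin.mk.injEq] at h
    omega
  set r : TO (Mon t) := (x : TO (Mon t)) with hr
  have hrDO : r ∈ DOset K t LM := x.2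
  have href := DCOaux.DO_refines hLM hrDO
  set r' : TO (Mon t) :=
    Subtype.mk (DCOaux.R r i d) (DCOaux.R_isTotalOrdering r i d) with hr'
  have hr'B : r' ∈ ⋂₀ f := by
    intro U hU
    have hUS : ∃ a b : Mon t, U = {r : TO (Mon t) | r.1 a b} := hsub hU
    have hUeq := hUS.choose_spec.choose_spec
    have hgU : g U = max (DCOaux.deg hUS.choose) (DCOaux.deg hUS.choose_spec.choose) :=
      dif_pos hUS
    have hbound : g U ≤ N := hN (Set.mem_image_of_mem g hU)
    have hxa : r.1 hUS.choose hUS.choose_spec.choose := by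
      have hm := hxB U hU
      rw [hUeq] at hm
      exact hm
    rw [hUeq]
    exact DCOaux.R_of_base href i (by omega) (by omega) hxa
  have hr'DO : r' ∈ DOset K t LM :=
    DCOaux.refines_DO hLM (fun m m' h => Or.inl h)
  have hr'mem : (⟨r', hr'DO⟩ : ↥(DOset K t LM)) ∈
      interior {x : ↥(DOset K t LM) | (x : TO (Mon t)) ∈ COset t} := by
    rw [← hOeq]
    exact hBO hr'B
  have hr'CO := interior_subset hr'mem
  exact DCOaux.R_not_CO r hij (by omega) hr'CO
end

section
/- Let ≺ and ≺' be total well-orderings on N, assume A is multiplicative on {≺, ≺'}, and let L be a left ideal of A with LM_≺(L) ⊆ LM_{≺'}(L). Then LM_≺(L) = LM_{≺'}(L). -/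
/- `A` is an associative (not necessarily commutative) `K`-algebra and
`Φ : A ≃ₗ[K] K[X_1,…,X_t]` a `K`-module isomorphism, so `N = Φ⁻¹(M)` is a `K`-basis of `A`.
A total ordering `≺` on `N` is identified, via the bijection induced by `Φ`, with a total
ordering on the monomials of `K[X]`, i.e. on exponent vectors `Mon t`. -/

/-- The leading monomial ideal `LM_≺(H)` of a subset `H ⊆ A`: the ideal of `K[X]` generated by
the leading monomials (the `≺`-maximal monomials of the support of `Φ(h)`) of the nonzero
elements `h ∈ H`. -/
noncomputable def LMAideal (K A : Type*) [Field K] [Ring A] [Algebra K A] (t : ℕ)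
    (Φ : A ≃ₗ[K] MvPolynomial (Fin t) K)
    (LM : TO (Mon t) → MvPolynomial (Fin t) K → Mon t)
    (r : TO (Mon t)) (H : Set A) : Ideal (MvPolynomial (Fin t) K) :=
  Ideal.span {q | ∃ h ∈ H, h ≠ 0 ∧ q = MvPolynomial.monomial (LM r (Φ h)) (1 : K)}

/-- `A` is multiplicative on a set `𝔗` of total orderings: `A` is a domain and
`LM_≺(a·b) = LM_≺(a)·LM_≺(b)` (i.e. addition of exponent vectors) for all nonzero
`a, b ∈ A` and all `≺ ∈ 𝔗`. -/
def MultOn (K A : Type*) [Field K] [Ring A] [Algebra K A] (t : ℕ)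
    (Φ : A ≃ₗ[K] MvPolynomial (Fin t) K)
    (LM : TO (Mon t) → MvPolynomial (Fin t) K → Mon t)
    (T : Set (TO (Mon t))) : Prop :=
  (∀ a b : A, a ≠ 0 → b ≠ 0 → a * b ≠ 0) ∧
  (∀ r ∈ T, ∀ a b : A, a ≠ 0 → b ≠ 0 → LM r (Φ (a * b)) = LM r (Φ a) + LM r (Φ b))

/-- A total ordering is a (total) well-ordering: every nonempty subset has a minimum. -/
def IsWO {S : Type*} (r : TO S) : Prop :=
  ∀ T : Set S, T.Nonempty → ∃ a ∈ T, ∀ b ∈ T, r.1 a b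

/-- If `≺, ≺'` are total well-orderings on `N`, `A` is multiplicative on `{≺, ≺'}`, and `L` is
a left ideal of `A` with `LM_≺(L) ⊆ LM_{≺'}(L)`, then `LM_≺(L) = LM_{≺'}(L)`. -/
theorem LMAideal_eq_of_le (K A : Type*) [Field K] [Ring A] [Algebra K A] (t : ℕ) (ht : 1 ≤ t)
    (Φ : A ≃ₗ[K] MvPolynomial (Fin t) K)
    (LM : TO (Mon t) → MvPolynomial (Fin t) K → Mon t) (hLM : IsLM K t LM)
    (r r' : TO (Mon t)) (hWO : IsWO r) (hWO' : IsWO r')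
    (hmult : MultOn K A t Φ LM {r, r'})
    (L : Submodule A A)
    (hle : LMAideal K A t Φ LM r (L : Set A) ≤ LMAideal K A t Φ LM r' (L : Set A)) :
    LMAideal K A t Φ LM r (L : Set A) = LMAideal K A t Φ LM r' (L : Set A) := by
  classical
  -- the sets of leading exponents
  set S : TO (Mon t) → Set (Mon t) :=
    fun r0 => {ν | ∃ h ∈ L, h ≠ 0 ∧ LM r0 (Φ h) = ν} with hS_def
  -- LM of a monomial
  have LMmono : ∀ (r0 : TO (Mon t)) (ν : Mon t) (c : K), c ≠ 0 →
      LM r0 (MvPolynomial.monomial ν c) = ν := by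
    intro r0 ν c hc
    have hne : (MvPolynomial.monomial ν c : MvPolynomial (Fin t) K) ≠ 0 := by
      simpa [MvPolynomial.monomial_eq_zero] using hc
    have h1 := (hLM r0 _ hne).1
    rw [MvPolynomial.support_monomial, if_neg hc] at h1
    simpa using h1
  -- the generating set of LMAideal equals a monomial image
  have genset : ∀ r0 : TO (Mon t),
      {q | ∃ h ∈ (L : Set A), h ≠ 0 ∧ q = MvPolynomial.monomial (LM r0 (Φ h)) (1 : K)}
        = (fun s => MvPolynomial.monomial s (1 : K)) '' S r0 := by
    intro r0
    ext q
    constructor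
    · rintro ⟨h, hh, hne, rfl⟩
      exact ⟨LM r0 (Φ h), ⟨h, hh, hne, rfl⟩, rfl⟩
    · rintro ⟨ν, ⟨h, hh, hne, rfl⟩, rfl⟩
      exact ⟨h, hh, hne, rfl⟩
  -- S is closed under adding arbitrary exponent vectors
  have Sclosed : ∀ r0 ∈ ({r, r'} : Set (TO (Mon t))), ∀ ν ∈ S r0, ∀ μ : Mon t,
      μ + ν ∈ S r0 := by
    rintro r0 hr0 ν ⟨h, hh, hne, hLMh⟩ μ
    set n : A := Φ.symm (MvPolynomial.monomial μ (1 : K)) with hn_def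
    have hΦn : Φ n = MvPolynomial.monomial μ (1 : K) := Φ.apply_symm_apply _
    have hnne : n ≠ 0 := by
      intro h0
      rw [h0, map_zero] at hΦn
      exact one_ne_zero ((MvPolynomial.monomial_eq_zero).mp hΦn.symm)
    have hprod : n * h ≠ 0 := hmult.1 n h hnne hne
    have hmem : n * h ∈ L := by
      have := L.smul_mem n hh
      simpa [smul_eq_mul] using this
    refine ⟨n * h, hmem, hprod, ?_⟩
    rw [hmult.2 r0 hr0 n h hnne hne, hΦn, LMmono r0 μ 1 one_ne_zero, hLMh]
  -- membership of a monomial in the LMAideal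
  have memIdeal : ∀ r0 ∈ ({r, r'} : Set (TO (Mon t))), ∀ σ : Mon t,
      (MvPolynomial.monomial σ (1 : K) ∈ LMAideal K A t Φ LM r0 (L : Set A)) ↔ σ ∈ S r0 := by
    intro r0 hr0 σ
    unfold LMAideal
    rw [genset r0, MvPolynomial.mem_ideal_span_monomial_image]
    constructor
    · intro h
      have hσ : σ ∈ (MvPolynomial.monomial σ (1 : K)).support := by
        rw [MvPolynomial.support_monomial, if_neg (one_ne_zero (α := K))]
        simp
      obtain ⟨s, hs, hle'⟩ := h σ hσ
      obtain ⟨c, rfl⟩ := le_iff_exists_add.mp hle'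
      exact add_comm s c ▸ Sclosed r0 hr0 s hs c
    · intro hσ xi hxi
      rw [MvPolynomial.support_monomial, if_neg (one_ne_zero (α := K))] at hxi
      simp only [Finset.mem_singleton] at hxi
      exact ⟨σ, hσ, hxi ▸ le_refl σ⟩
  -- S r ⊆ S r'
  have hSsub : S r ⊆ S r' := by
    rintro ν ⟨h, hh, hne, hLMh⟩
    have : MvPolynomial.monomial ν (1 : K) ∈ LMAideal K A t Φ LM r (L : Set A) := by
      apply Ideal.subset_span
      exact ⟨h, hh, hne, by rw [hLMh]⟩
    exact (memIdeal r' (Or.inr rfl) ν).mp (hle this)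
  -- well-foundedness of the strict order of r'
  set s' : Mon t → Mon t → Prop := fun x y => r'.1 x y ∧ x ≠ y with hs'_def
  have wf : WellFounded s' := by
    rw [WellFounded.wellFounded_iff_has_min]
    intro T hT
    obtain ⟨a, ha, hmin⟩ := hWO' T hT
    exact ⟨a, ha, fun x hx hxa => hxa.2 (r'.2.1 x a hxa.1 (hmin x hx))⟩
  -- normal form: every a reduces mod L to b with support outside S r'
  have NF : ∀ ν : Mon t, ∀ a : A, a ≠ 0 → LM r' (Φ a) = ν →
      ∃ b : A, a - b ∈ L ∧ ∀ m ∈ (Φ b).support, m ∉ S r' := by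
    refine fun ν0 => wf.induction (C := fun ν => ∀ a : A, a ≠ 0 → LM r' (Φ a) = ν →
      ∃ b : A, a - b ∈ L ∧ ∀ m ∈ (Φ b).support, m ∉ S r') ν0 (fun ν IH => ?_)
    intro a ha hLMa
    have hΦa : Φ a ≠ 0 := fun h0 => ha (by simpa using Φ.injective (h0.trans (map_zero Φ).symm))
    have hνsup : ν ∈ (Φ a).support := hLMa ▸ (hLM r' (Φ a) hΦa).1
    have hmax : ∀ m ∈ (Φ a).support, r'.1 m ν := hLMa ▸ (hLM r' (Φ a) hΦa).2
    have hc : (Φ a).coeff ν ≠ 0 := MvPolynomial.mem_support_iff.mp hνsup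
    by_cases hν : ν ∈ S r'
    · -- reduce by an element of L with leading monomial ν
      obtain ⟨g, hg, hgne, hLMg⟩ := hν
      have hΦg : Φ g ≠ 0 :=
        fun h0 => hgne (by simpa using Φ.injective (h0.trans (map_zero Φ).symm))
      have hd : (Φ g).coeff ν ≠ 0 := by
        have := (hLM r' (Φ g) hΦg).1
        rw [hLMg] at this
        exact MvPolynomial.mem_support_iff.mp this
      have hmaxg : ∀ m ∈ (Φ g).support, r'.1 m ν := hLMg ▸ (hLM r' (Φ g) hΦg).2
      set c : K := (Φ a).coeff ν / (Φ g).coeff ν with hc_def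
      set a₂ : A := a - c • g with ha₂_def
      have hΦa₂ : Φ a₂ = Φ a - c • Φ g := by rw [ha₂_def, map_sub, map_smul]
      have hcoeffν : (Φ a₂).coeff ν = 0 := by
        rw [hΦa₂, MvPolynomial.coeff_sub, MvPolynomial.coeff_smul, smul_eq_mul, hc_def,
          div_mul_cancel₀ _ hd, sub_self]
      have hsup₂ : ∀ m ∈ (Φ a₂).support, r'.1 m ν ∧ m ≠ ν := by
        intro m hm
        have hmne : m ≠ ν := by
          intro h0; rw [h0] at hm
          exact MvPolynomial.mem_support_iff.mp hm hcoeffν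
        refine ⟨?_, hmne⟩
        have hcm : (Φ a₂).coeff m ≠ 0 := MvPolynomial.mem_support_iff.mp hm
        rw [hΦa₂, MvPolynomial.coeff_sub, MvPolynomial.coeff_smul, smul_eq_mul] at hcm
        by_cases h1 : (Φ a).coeff m = 0
        · have h2 : (Φ g).coeff m ≠ 0 := by
            intro h3; rw [h1, h3, mul_zero, sub_zero] at hcm; exact hcm rfl
          exact hmaxg m (MvPolynomial.mem_support_iff.mpr h2)
        · exact hmax m (MvPolynomial.mem_support_iff.mpr h1)
      have hcgL : c • g ∈ L := by
        rw [← algebraMap_smul A c g]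
        exact L.smul_mem _ hg
      by_cases ha₂ : a₂ = 0
      · refine ⟨0, ?_, by simp⟩
        rw [ha₂_def] at ha₂
        have hag : a = c • g := sub_eq_zero.mp ha₂
        rw [sub_zero, hag]
        exact hcgL
      · have hΦa₂ne : Φ a₂ ≠ 0 :=
          fun h0 => ha₂ (by simpa using Φ.injective (h0.trans (map_zero Φ).symm))
        have hlt : s' (LM r' (Φ a₂)) ν := hsup₂ (LM r' (Φ a₂)) (hLM r' (Φ a₂) hΦa₂ne).1
        obtain ⟨b, hb1, hb2⟩ := IH (LM r' (Φ a₂)) hlt a₂ ha₂ rfl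
        refine ⟨b, ?_, hb2⟩
        have heq : a - b = (a₂ - b) + c • g := by rw [ha₂_def]; abel
        rw [heq]
        exact L.add_mem hb1 hcgL
    · -- strip off the leading monomial, which lies outside S r'
      set n : A := Φ.symm (MvPolynomial.monomial ν ((Φ a).coeff ν)) with hn_def
      have hΦn : Φ n = MvPolynomial.monomial ν ((Φ a).coeff ν) := Φ.apply_symm_apply _
      have hsupn : (Φ n).support = {ν} := by
        rw [hΦn, MvPolynomial.support_monomial, if_neg hc]
      set a₂ : A := a - n with ha₂_def
      have hΦa₂ : Φ a₂ = Φ a - MvPolynomial.monomial ν ((Φ a).coeff ν) := by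
        rw [ha₂_def, map_sub, hΦn]
      have hcoeffν : (Φ a₂).coeff ν = 0 := by
        rw [hΦa₂, MvPolynomial.coeff_sub, MvPolynomial.coeff_monomial, if_pos rfl, sub_self]
      have hsup₂ : ∀ m ∈ (Φ a₂).support, r'.1 m ν ∧ m ≠ ν := by
        intro m hm
        have hmne : m ≠ ν := by
          intro h0; rw [h0] at hm
          exact MvPolynomial.mem_support_iff.mp hm hcoeffν
        refine ⟨?_, hmne⟩
        have hcm : (Φ a₂).coeff m ≠ 0 := MvPolynomial.mem_support_iff.mp hm
        rw [hΦa₂, MvPolynomial.coeff_sub, MvPolynomial.coeff_monomial, if_neg (Ne.symm hmne),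
          sub_zero] at hcm
        exact hmax m (MvPolynomial.mem_support_iff.mpr hcm)
      by_cases ha₂ : a₂ = 0
      · refine ⟨n, ?_, ?_⟩
        · rw [ha₂_def] at ha₂
          rw [ha₂]
          exact L.zero_mem
        · intro m hm
          rw [hsupn] at hm
          simp only [Finset.mem_singleton] at hm
          rw [hm]; exact hν
      · have hΦa₂ne : Φ a₂ ≠ 0 :=
          fun h0 => ha₂ (by simpa using Φ.injective (h0.trans (map_zero Φ).symm))
        have hlt : s' (LM r' (Φ a₂)) ν := hsup₂ (LM r' (Φ a₂)) (hLM r' (Φ a₂) hΦa₂ne).1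
        obtain ⟨b₂, hb1, hb2⟩ := IH (LM r' (Φ a₂)) hlt a₂ ha₂ rfl
        refine ⟨b₂ + n, ?_, ?_⟩
        · have heq : a - (b₂ + n) = a₂ - b₂ := by rw [ha₂_def]; abel
          rw [heq]; exact hb1
        · intro m hm
          rw [map_add] at hm
          have hmem := MvPolynomial.support_add hm
          rw [Finset.mem_union] at hmem
          rcases hmem with h1 | h1
          · exact hb2 m h1
          · rw [hsupn] at h1
            simp only [Finset.mem_singleton] at h1
            rw [h1]; exact hν
  -- S r' ⊆ S r
  have hSsub' : S r' ⊆ S r := by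
    intro ν hν
    by_contra hνS
    set a : A := Φ.symm (MvPolynomial.monomial ν (1 : K)) with ha_def
    have hΦa : Φ a = MvPolynomial.monomial ν (1 : K) := Φ.apply_symm_apply _
    have hane : a ≠ 0 := by
      intro h0; rw [h0, map_zero] at hΦa
      exact one_ne_zero ((MvPolynomial.monomial_eq_zero).mp hΦa.symm)
    obtain ⟨b, hbL, hbsup⟩ := NF (LM r' (Φ a)) a hane rfl
    set f : A := a - b with hf_def
    have hfne : f ≠ 0 := by
      intro h0
      rw [hf_def] at h0
      have hab : a = b := sub_eq_zero.mp h0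
      have hνb : ν ∈ (Φ b).support := by
        rw [← hab, hΦa, MvPolynomial.support_monomial, if_neg (one_ne_zero (α := K))]
        simp
      exact hbsup ν hνb hν
    have hμ : LM r (Φ f) ∈ S r := ⟨f, hbL, hfne, rfl⟩
    have hμ' : LM r (Φ f) ∈ S r' := hSsub hμ
    have hΦf : Φ f ≠ 0 :=
      fun h0 => hfne (by simpa using Φ.injective (h0.trans (map_zero Φ).symm))
    have hμsup : LM r (Φ f) ∈ (Φ f).support := (hLM r (Φ f) hΦf).1
    have hΦf_eq : Φ f = MvPolynomial.monomial ν (1 : K) - Φ b := by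
      rw [hf_def, map_sub, hΦa]
    have hmem := MvPolynomial.support_sub (Fin t) (MvPolynomial.monomial ν (1 : K)) (Φ b)
      (by rw [← hΦf_eq]; exact hμsup)
    rw [Finset.mem_union] at hmem
    rcases hmem with h1 | h1
    · rw [MvPolynomial.support_monomial, if_neg (one_ne_zero (α := K))] at h1
      simp only [Finset.mem_singleton] at h1
      exact hνS (h1 ▸ hμ)
    · exact hbsup _ h1 hμ'
  -- conclude
  apply le_antisymm hle
  unfold LMAideal
  rw [genset r', genset r]
  apply Ideal.span_le.mpr
  rintro q ⟨ν, hν, rfl⟩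
  obtain ⟨h, hh, hne, hLMh⟩ := hSsub' hν
  rw [← genset r]
  apply Ideal.subset_span
  exact ⟨h, hh, hne, by rw [hLMh]⟩
end

section
/- Let ≺ be a total well-ordering on N such that A is multiplicative on {≺}. Let L be a left ideal of A and let F be a finite subset of L such that LM_≺(L) = LM_≺(F). Then L = Σ_{f∈F} A·f, i.e. F generates L as a left ideal. -/
/-- If `≺` is a total well-ordering on `N`, `A` is multiplicative on `{≺}`, `L` is a left ideal
of `A`, and `F` is a finite subset of `L` with `LM_≺(L) = LM_≺(F)`, then `F` generates `L` as a
left ideal: `L = Σ_{f ∈ F} A·f`. -/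
theorem span_of_LMAideal_eq (K A : Type*) [Field K] [Ring A] [Algebra K A] (t : ℕ) (ht : 1 ≤ t)
    (Φ : A ≃ₗ[K] MvPolynomial (Fin t) K)
    (LM : TO (Mon t) → MvPolynomial (Fin t) K → Mon t) (hLM : IsLM K t LM)
    (r : TO (Mon t)) (hWO : IsWO r)
    (hmult : MultOn K A t Φ LM {r})
    (L : Submodule A A) (F : Finset A) (hFL : (F : Set A) ⊆ (L : Set A))
    (hLMeq : LMAideal K A t Φ LM r (L : Set A) = LMAideal K A t Φ LM r (F : Set A)) :
    L = Submodule.span A (F : Set A) := by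

  classical
  set S := Submodule.span A (F : Set A) with hS
  have hSL : S ≤ L := Submodule.span_le.mpr hFL
  -- main inclusion
  have hLS : ∀ x ∈ L, x ∈ S := by
    by_contra hbad
    push_neg at hbad
    set T : Set (Mon t) := {m | ∃ x, x ∈ L ∧ x ∉ S ∧ x ≠ 0 ∧ m = LM r (Φ x)} with hT
    have hTne : T.Nonempty := by
      obtain ⟨x, hxL, hxS⟩ := hbad
      have hx0 : x ≠ 0 := by rintro rfl; exact hxS (Submodule.zero_mem S)
      exact ⟨LM r (Φ x), x, hxL, hxS, hx0, rfl⟩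
    obtain ⟨m, ⟨x, hxL, hxS, hx0, hm⟩, hmin⟩ := hWO T hTne
    have hΦx0 : Φ x ≠ 0 := fun h => hx0 (by simpa using Φ.map_eq_zero_iff.mp h)
    have hLMx := hLM r (Φ x) hΦx0
    -- monomial m 1 lies in LMAideal of F
    have hmem : (MvPolynomial.monomial m (1 : K)) ∈ LMAideal K A t Φ LM r (F : Set A) := by
      rw [← hLMeq]
      exact Ideal.subset_span ⟨x, hxL, hx0, by rw [hm]⟩
    -- rewrite as span of monomial image
    have hmem' : (MvPolynomial.monomial m (1 : K)) ∈
        Ideal.span ((fun s => MvPolynomial.monomial s (1 : K)) ''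
          {s | ∃ h ∈ (F : Set A), h ≠ 0 ∧ s = LM r (Φ h)}) := by
      convert hmem using 2
      unfold LMAideal
      congr 1
      ext q
      constructor
      · rintro ⟨s, ⟨h, hh, hh0, rfl⟩, rfl⟩; exact ⟨h, hh, hh0, rfl⟩
      · rintro ⟨h, hh, hh0, rfl⟩; exact ⟨LM r (Φ h), ⟨h, hh, hh0, rfl⟩, rfl⟩
    rw [MvPolynomial.mem_ideal_span_monomial_image] at hmem'
    have hmsupp : m ∈ (MvPolynomial.monomial m (1 : K)).support := by
      rw [MvPolynomial.support_monomial, if_neg (one_ne_zero : (1:K) ≠ 0)]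
      exact Finset.mem_singleton_self m
    obtain ⟨si, ⟨f, hfF, hf0, hsi⟩, hle⟩ := hmem' m hmsupp
    obtain ⟨δ, hδ⟩ := le_iff_exists_add.mp hle
    subst hsi
    -- build u with Φ u = monomial δ 1
    set u : A := Φ.symm (MvPolynomial.monomial δ (1 : K)) with hu
    have hΦu : Φ u = MvPolynomial.monomial δ (1 : K) := Φ.apply_symm_apply _
    have hu0 : u ≠ 0 := by
      intro h
      have : MvPolynomial.monomial δ (1 : K) = 0 := by rw [← hΦu, h, map_zero]
      exact (one_ne_zero : (1:K) ≠ 0) (MvPolynomial.monomial_eq_zero.mp this)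
    have hLMu : LM r (Φ u) = δ := by
      rw [hΦu]
      have h1 : (MvPolynomial.monomial δ (1:K)) ≠ 0 := fun h =>
        (one_ne_zero : (1:K) ≠ 0) (MvPolynomial.monomial_eq_zero.mp h)
      have h2 := (hLM r _ h1).1
      rw [MvPolynomial.support_monomial, if_neg (one_ne_zero : (1:K) ≠ 0)] at h2
      exact Finset.mem_singleton.mp h2
    have huf0 : u * f ≠ 0 := hmult.1 u f hu0 hf0
    have hΦuf0 : Φ (u * f) ≠ 0 := fun h => huf0 (by simpa using Φ.map_eq_zero_iff.mp h)
    have hLMuf : LM r (Φ (u * f)) = m := by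
      rw [hmult.2 r rfl u f hu0 hf0, hLMu, hδ, add_comm]
    -- the leading coefficient of Φ (u*f)
    set d : K := (Φ (u * f)).coeff m with hd
    have hd0 : d ≠ 0 := by
      have := (hLM r (Φ (u * f)) hΦuf0).1
      rw [hLMuf] at this
      exact MvPolynomial.mem_support_iff.mp this
    set c : K := (Φ x).coeff m * d⁻¹ with hc
    set g : A := x - c • (u * f) with hg
    have hcufS : c • (u * f) ∈ S := by
      have : f ∈ S := Submodule.subset_span hfF
      have h2 : (c • u) • f ∈ S := Submodule.smul_mem S _ this
      rwa [smul_eq_mul, smul_mul_assoc] at h2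
    have hcufL : c • (u * f) ∈ L := hSL hcufS
    have hgL : g ∈ L := Submodule.sub_mem L hxL hcufL
    have hgS : g ∉ S := fun h => hxS (by
      have : x = g + c • (u * f) := by rw [hg]; abel
      rw [this]; exact Submodule.add_mem S h hcufS)
    have hg0 : g ≠ 0 := by
      intro h
      apply hxS
      have : x = c • (u * f) := by rw [← sub_eq_zero]; exact h
      rw [this]; exact hcufS
    -- Φ g has zero coefficient at m
    have hΦg : Φ g = Φ x - c • Φ (u * f) := by rw [hg, map_sub, map_smul]
    have hcoeffg : (Φ g).coeff m = 0 := by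
      rw [hΦg, MvPolynomial.coeff_sub, MvPolynomial.coeff_smul, hc, smul_eq_mul,
        mul_assoc, inv_mul_cancel₀ hd0, mul_one, sub_self]
    have hΦg0 : Φ g ≠ 0 := fun h => hg0 (by simpa using Φ.map_eq_zero_iff.mp h)
    have hLMg := hLM r (Φ g) hΦg0
    -- LM g ∈ T
    have hgT : LM r (Φ g) ∈ T := ⟨g, hgL, hgS, hg0, rfl⟩
    have hmg : r.1 m (LM r (Φ g)) := hmin _ hgT
    -- support of Φ g is in union; everything there is ≤ m
    have hsub : (Φ g).support ⊆ (Φ x).support ∪ (Φ (u * f)).support := by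
      rw [hΦg]
      refine (MvPolynomial.support_sub _ _ _).trans ?_
      exact Finset.union_subset_union le_rfl MvPolynomial.support_smul
    have hgm : r.1 (LM r (Φ g)) m := by
      have hsupp := hsub hLMg.1
      rcases Finset.mem_union.mp hsupp with h | h
      · rw [hm]; exact hLMx.2 _ h
      · have := (hLM r (Φ (u * f)) hΦuf0).2 _ h
        rwa [hLMuf] at this
    have heq : m = LM r (Φ g) := r.2.1 _ _ hmg hgm
    -- but m is not in support of Φ g
    have : LM r (Φ g) ∈ (Φ g).support := hLMg.1
    rw [← heq] at this
    exact MvPolynomial.mem_support_iff.mp this hcoeffg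
  exact le_antisymm hLS hSL
end
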